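/- Let Ω ⊆ ℝⁿ be open, 1 ≤ k ≤ n, f : Ω×ℝ → ℝ continuous, and g : ℝ → ℝ continuous satisfying (g₀). Set h(x, s) = e^{kG(Φ_g⁻¹(s))} f(x, Φ_g⁻¹(s)). Then u ∈ C²(Ω) satisfies tr_k(D²u) + g(u) D(tr_k)(D²u)[Du⊗Du] + f(x, u) = 0 at every point of Ω if and only if v = Φ_g ∘ u satisfies tr_k(D²v) + h(x, v) = 0 at every point of Ω. -/

import Mathlib

open Real Filter Set

/-- Gradient of `u` at `x` (vector of partial derivatives). -/
noncomputable def vgrad {n : ℕ} (u : (Fin n → ℝ) → ℝ) (x : Fin n → ℝ) : Fin n → ℝ :=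
  fun i => fderiv ℝ u x (Pi.single i 1)

/-- Hessian matrix of `u` at `x`. -/
noncomputable def vhess {n : ℕ} (u : (Fin n → ℝ) → ℝ) (x : Fin n → ℝ) :
    Matrix (Fin n) (Fin n) ℝ :=
  Matrix.of fun i j => fderiv ℝ (fun y => fderiv ℝ u y (Pi.single j 1)) x (Pi.single i 1)

noncomputable def Gg (g : ℝ → ℝ) (s : ℝ) : ℝ := ∫ τ in (0:ℝ)..s, g τ

noncomputable def Phig (g : ℝ → ℝ) (t : ℝ) : ℝ := ∫ s in (0:ℝ)..t, Real.exp (Gg g s)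

/-- Condition `(g₀)`. -/
def g0cond (g : ℝ → ℝ) : Prop :=
  ∃ s₀ : ℝ, 0 ≤ s₀ ∧ (∀ s, s₀ ≤ s → 0 ≤ g s) ∧ (∀ s, s ≤ -s₀ → g s ≤ 0)
/-- The k-trace: the sum of all k×k principal minors of a matrix. -/
noncomputable def ktrace (n k : ℕ) (X : Matrix (Fin n) (Fin n) ℝ) : ℝ :=
  ∑ S ∈ Finset.univ.powersetCard k,
    (X.submatrix (fun i : {a : Fin n // a ∈ S} => (i : Fin n))
      (fun j : {a : Fin n // a ∈ S} => (j : Fin n))).det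

/-- The derivative of the k-trace at X in the direction A: the Fréchet derivative
D(tr_k)(X)[A] (tr_k being a polynomial map, its Fréchet derivative applied to A equals its
directional derivative along A). -/
noncomputable def ktraceDeriv (n k : ℕ) (X A : Matrix (Fin n) (Fin n) ℝ) : ℝ :=
  deriv (fun t : ℝ => ktrace n k (X + t • A)) 0


section Aux
open Topology

lemma det_add_smul_vecMulVec_of_isUnit {m : Type*} [Fintype m] [DecidableEq m]
    {A : Matrix m m ℝ} (hA : IsUnit A.det) (q : m → ℝ) (t : ℝ) :
    (A + t • Matrix.vecMulVec q q).det
      = A.det + t * (A.det * ((Matrix.replicateRow Unit q * A⁻¹ * Matrix.replicateCol Unit q) () ())) := by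
  have h1 : t • Matrix.vecMulVec q q = Matrix.replicateCol Unit (t • q) * Matrix.replicateRow Unit q := by
    rw [← Matrix.vecMulVec_eq]
    ext i j
    simp [Matrix.vecMulVec_apply, mul_assoc]
  have h2 : Matrix.replicateCol Unit (t • q) = t • Matrix.replicateCol Unit q := by
    ext i j; simp
  rw [h1, Matrix.det_add_replicateCol_mul_replicateRow hA, h2, Matrix.mul_smul]
  have h3 : (1 + t • (Matrix.replicateRow Unit q * A⁻¹ * Matrix.replicateCol Unit q)).det
      = 1 + t * ((Matrix.replicateRow Unit q * A⁻¹ * Matrix.replicateCol Unit q) () ()) := by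
    rw [Matrix.det_unique]
    simp only [Matrix.add_apply, Matrix.one_apply_eq, Matrix.smul_apply, smul_eq_mul]
  rw [h3]
  ring

lemma finite_nonunit {m : Type*} [Fintype m] [DecidableEq m] (M : Matrix m m ℝ) :
    {ε : ℝ | ¬ IsUnit (M + ε • (1 : Matrix m m ℝ)).det}.Finite := by
  have key : ∀ ε : ℝ, (M + ε • (1 : Matrix m m ℝ)).det
      = ((-M).charpoly).eval ε := by
    intro ε
    rw [Matrix.charpoly, show Polynomial.eval ε = ⇑(Polynomial.evalRingHom ε) from rfl,
      RingHom.map_det]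
    congr 1
    ext i j
    by_cases h : i = j <;>
      simp [Matrix.charmatrix_apply, Matrix.diagonal_apply, h, Matrix.one_apply, add_comm]
  apply Set.Finite.subset (Polynomial.finite_setOf_isRoot ((-M).charpoly_monic.ne_zero))
  intro ε hε
  simp only [Set.mem_setOf_eq, isUnit_iff_ne_zero, not_not, key] at hε
  exact hε

lemma det_add_smul_vecMulVec {m : Type*} [Fintype m] [DecidableEq m]
    (M : Matrix m m ℝ) (q : m → ℝ) (t : ℝ) :
    (M + t • Matrix.vecMulVec q q).det
      = M.det + t * ((M + Matrix.vecMulVec q q).det - M.det) := by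
  have hdense : Dense {ε : ℝ | IsUnit (M + ε • (1 : Matrix m m ℝ)).det} := by
    have h := ((finite_nonunit M).countable).dense_compl ℝ
    convert h using 1
    ext ε; simp
  set F : ℝ → ℝ := fun ε => (M + ε • (1 : Matrix m m ℝ) + t • Matrix.vecMulVec q q).det with hF
  set G : ℝ → ℝ := fun ε => (M + ε • (1 : Matrix m m ℝ)).det
      + t * ((M + ε • (1 : Matrix m m ℝ) + Matrix.vecMulVec q q).det
        - (M + ε • (1 : Matrix m m ℝ)).det) with hG
  have hcM : Continuous fun ε : ℝ => M + ε • (1 : Matrix m m ℝ) :=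
    continuous_const.add (continuous_id.smul continuous_const)
  have hFc : Continuous F := ((hcM.add continuous_const).matrix_det)
  have hGc : Continuous G :=
    (hcM.matrix_det).add (continuous_const.mul
      (((hcM.add continuous_const).matrix_det).sub (hcM.matrix_det)))
  have heq : F = G := by
    apply hFc.ext_on hdense hGc
    intro ε hε
    simp only [Set.mem_setOf_eq] at hε
    have e1 := det_add_smul_vecMulVec_of_isUnit hε q t
    have e2 := det_add_smul_vecMulVec_of_isUnit hε q 1
    rw [one_smul] at e2
    simp only [hF, hG, e1, e2]
    ring
  have := congrFun heq 0
  simpa [hF, hG] using this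


lemma ktrace_add_smul (n k : ℕ) (X : Matrix (Fin n) (Fin n) ℝ) (p : Fin n → ℝ) (t : ℝ) :
    ktrace n k (X + t • Matrix.vecMulVec p p)
      = ktrace n k X + t * (ktrace n k (X + Matrix.vecMulVec p p) - ktrace n k X) := by
  unfold ktrace
  have key : ∀ S ∈ Finset.univ.powersetCard k,
      ((X + t • Matrix.vecMulVec p p).submatrix
        (fun i : {a : Fin n // a ∈ S} => (i : Fin n))
        (fun j : {a : Fin n // a ∈ S} => (j : Fin n))).det
      = (X.submatrix (fun i : {a : Fin n // a ∈ S} => (i : Fin n))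
          (fun j : {a : Fin n // a ∈ S} => (j : Fin n))).det
        + t * (((X + Matrix.vecMulVec p p).submatrix
            (fun i : {a : Fin n // a ∈ S} => (i : Fin n))
            (fun j : {a : Fin n // a ∈ S} => (j : Fin n))).det
          - (X.submatrix (fun i : {a : Fin n // a ∈ S} => (i : Fin n))
              (fun j : {a : Fin n // a ∈ S} => (j : Fin n))).det) := by
    intro S _
    have h1 : (X + t • Matrix.vecMulVec p p).submatrix
        (fun i : {a : Fin n // a ∈ S} => (i : Fin n))
        (fun j : {a : Fin n // a ∈ S} => (j : Fin n))
        = X.submatrix (fun i : {a : Fin n // a ∈ S} => (i : Fin n))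
            (fun j : {a : Fin n // a ∈ S} => (j : Fin n))
          + t • Matrix.vecMulVec (fun i : {a : Fin n // a ∈ S} => p i)
              (fun j : {a : Fin n // a ∈ S} => p j) := by
      ext i j; rfl
    have h2 : (X + Matrix.vecMulVec p p).submatrix
        (fun i : {a : Fin n // a ∈ S} => (i : Fin n))
        (fun j : {a : Fin n // a ∈ S} => (j : Fin n))
        = X.submatrix (fun i : {a : Fin n // a ∈ S} => (i : Fin n))
            (fun j : {a : Fin n // a ∈ S} => (j : Fin n))
          + Matrix.vecMulVec (fun i : {a : Fin n // a ∈ S} => p i)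
              (fun j : {a : Fin n // a ∈ S} => p j) := by
      ext i j; rfl
    rw [h1, h2, det_add_smul_vecMulVec]
  rw [Finset.sum_congr rfl key, Finset.sum_add_distrib, ← Finset.mul_sum,
    Finset.sum_sub_distrib]

lemma ktraceDeriv_vecMulVec (n k : ℕ) (X : Matrix (Fin n) (Fin n) ℝ) (p : Fin n → ℝ) :
    ktraceDeriv n k X (Matrix.vecMulVec p p)
      = ktrace n k (X + Matrix.vecMulVec p p) - ktrace n k X := by
  unfold ktraceDeriv
  have h : (fun t : ℝ => ktrace n k (X + t • Matrix.vecMulVec p p))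
      = fun t => ktrace n k X
        + t * (ktrace n k (X + Matrix.vecMulVec p p) - ktrace n k X) :=
    funext fun t => ktrace_add_smul n k X p t
  rw [h]
  have : HasDerivAt (fun t : ℝ => ktrace n k X
        + t * (ktrace n k (X + Matrix.vecMulVec p p) - ktrace n k X))
      (ktrace n k (X + Matrix.vecMulVec p p) - ktrace n k X) 0 := by
    simpa using ((hasDerivAt_id (0:ℝ)).mul_const
      (ktrace n k (X + Matrix.vecMulVec p p) - ktrace n k X)).const_add (ktrace n k X)
  exact this.deriv

lemma ktrace_add_smul' (n k : ℕ) (X : Matrix (Fin n) (Fin n) ℝ) (p : Fin n → ℝ) (b : ℝ) :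
    ktrace n k (X + b • Matrix.vecMulVec p p)
      = ktrace n k X + b * ktraceDeriv n k X (Matrix.vecMulVec p p) := by
  rw [ktraceDeriv_vecMulVec, ktrace_add_smul]

lemma ktrace_smul (n k : ℕ) (c : ℝ) (X : Matrix (Fin n) (Fin n) ℝ) :
    ktrace n k (c • X) = c ^ k * ktrace n k X := by
  unfold ktrace
  rw [Finset.mul_sum]
  refine Finset.sum_congr rfl fun S hS => ?_
  have hcard : S.card = k := (Finset.mem_powersetCard.mp hS).2
  have h1 : (c • X).submatrix (fun i : {a : Fin n // a ∈ S} => (i : Fin n))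
      (fun j : {a : Fin n // a ∈ S} => (j : Fin n))
      = c • X.submatrix (fun i : {a : Fin n // a ∈ S} => (i : Fin n))
          (fun j : {a : Fin n // a ∈ S} => (j : Fin n)) := by
    ext i j; rfl
  rw [h1, Matrix.det_smul]
  congr 2
  rw [Fintype.card_coe, hcard]

lemma hasDerivAt_Gg {g : ℝ → ℝ} (hg : Continuous g) (t : ℝ) : HasDerivAt (Gg g) (g t) t :=
  intervalIntegral.integral_hasDerivAt_right (hg.intervalIntegrable _ _)
    (hg.stronglyMeasurableAtFilter _ _) hg.continuousAt

lemma continuous_Gg {g : ℝ → ℝ} (hg : Continuous g) : Continuous (Gg g) := by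
  have : Differentiable ℝ (Gg g) := fun t => (hasDerivAt_Gg hg t).differentiableAt
  exact this.continuous

lemma hasDerivAt_Phig {g : ℝ → ℝ} (hg : Continuous g) (t : ℝ) :
    HasDerivAt (Phig g) (Real.exp (Gg g t)) t := by
  have hc : Continuous fun s => Real.exp (Gg g s) := Real.continuous_exp.comp (continuous_Gg hg)
  exact intervalIntegral.integral_hasDerivAt_right (hc.intervalIntegrable _ _)
    (hc.stronglyMeasurableAtFilter _ _) hc.continuousAt

lemma vhess_comp {n : ℕ} {Ω : Set (Fin n → ℝ)} (hΩ : IsOpen Ω) {g : ℝ → ℝ} (hg : Continuous g)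
    {u : (Fin n → ℝ) → ℝ} (hu : ContDiffOn ℝ 2 u Ω) {x : Fin n → ℝ} (hx : x ∈ Ω) :
    vhess (Phig g ∘ u) x = Real.exp (Gg g (u x)) •
      (vhess u x + g (u x) • Matrix.vecMulVec (vgrad u x) (vgrad u x)) := by
  have hmem : Ω ∈ 𝓝 x := hΩ.mem_nhds hx
  have hudiff : ∀ y ∈ Ω, DifferentiableAt ℝ u y := fun y hy =>
    (hu.contDiffAt (hΩ.mem_nhds hy)).differentiableAt (by norm_num)
  have hinner : ∀ y ∈ Ω, ∀ j : Fin n, fderiv ℝ (Phig g ∘ u) y (Pi.single j 1)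
      = Real.exp (Gg g (u y)) * fderiv ℝ u y (Pi.single j 1) := by
    intro y hy j
    have hF : HasFDerivAt (Phig g ∘ u) (Real.exp (Gg g (u y)) • fderiv ℝ u y) y :=
      (hasDerivAt_Phig hg (u y)).comp_hasFDerivAt y (hudiff y hy).hasFDerivAt
    rw [hF.fderiv]
    simp
  ext i j
  have heq : (fun y => fderiv ℝ (Phig g ∘ u) y (Pi.single j 1))
      =ᶠ[𝓝 x] fun y => Real.exp (Gg g (u y)) * fderiv ℝ u y (Pi.single j 1) :=
    eventually_of_mem hmem fun y hy => hinner y hy j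
  have hA : HasFDerivAt (fun y => Real.exp (Gg g (u y)))
      ((Real.exp (Gg g (u x)) * g (u x)) • fderiv ℝ u x) x := by
    have h1 : HasDerivAt (fun s => Real.exp (Gg g s))
        (Real.exp (Gg g (u x)) * g (u x)) (u x) := (hasDerivAt_Gg hg (u x)).exp
    exact h1.comp_hasFDerivAt x (hudiff x hx).hasFDerivAt
  have hB : DifferentiableAt ℝ (fun y => fderiv ℝ u y (Pi.single j 1)) x := by
    have h2 : ContDiffAt ℝ 1 (fderiv ℝ u) x :=
      (hu.contDiffAt hmem).fderiv_right (by norm_num)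
    exact (h2.differentiableAt one_ne_zero).clm_apply (differentiableAt_const _)
  have hent : vhess (Phig g ∘ u) x i j
      = fderiv ℝ (fun y => Real.exp (Gg g (u y)) * fderiv ℝ u y (Pi.single j 1)) x
          (Pi.single i 1) := by
    show fderiv ℝ (fun y => fderiv ℝ (Phig g ∘ u) y (Pi.single j 1)) x (Pi.single i 1) = _
    rw [heq.fderiv_eq]
  rw [hent, fderiv_fun_mul hA.differentiableAt hB]
  have hAf : fderiv ℝ (fun y => Real.exp (Gg g (u y))) x
      = (Real.exp (Gg g (u x)) * g (u x)) • fderiv ℝ u x := hA.fderiv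
  simp only [ContinuousLinearMap.add_apply, ContinuousLinearMap.smul_apply, hAf,
    smul_eq_mul, Matrix.smul_apply, Matrix.add_apply, Matrix.vecMulVec_apply]
  have hvh : fderiv ℝ (fun y => fderiv ℝ u y (Pi.single j 1)) x (Pi.single i 1)
      = vhess u x i j := rfl
  rw [hvh]
  show Real.exp (Gg g (u x)) * vhess u x i j
      + fderiv ℝ u x (Pi.single j 1) * (Real.exp (Gg g (u x)) * g (u x) * fderiv ℝ u x (Pi.single i 1))
      = Real.exp (Gg g (u x)) * (vhess u x i j + g (u x) * (vgrad u x i * vgrad u x j))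
  unfold vgrad
  ring

end Aux
/-- k-Hessian: u ∈ C²(Ω) solves
tr_k(D²u) + g(u) D(tr_k)(D²u)[Du⊗Du] + f(x,u) = 0 iff v = Φ_g ∘ u solves
tr_k(D²v) + h(x,v) = 0 with h(x,s) = e^{kG(Φ_g⁻¹(s))} f(x, Φ_g⁻¹(s)). -/
theorem stmt18 {n : ℕ} (Ω : Set (Fin n → ℝ)) (hΩ : IsOpen Ω)
    (k : ℕ) (hk1 : 1 ≤ k) (hkn : k ≤ n)
    (f : (Fin n → ℝ) → ℝ → ℝ)
    (hf : ContinuousOn (fun q : (Fin n → ℝ) × ℝ => f q.1 q.2) (Ω ×ˢ Set.univ))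
    (g : ℝ → ℝ) (hg : Continuous g) (hg0 : g0cond g)
    (Φinv : ℝ → ℝ) (hleft : ∀ t : ℝ, Φinv (Phig g t) = t)
    (hright : ∀ s : ℝ, Phig g (Φinv s) = s)
    (u : (Fin n → ℝ) → ℝ) (hu : ContDiffOn ℝ 2 u Ω) :
    (∀ x ∈ Ω, ktrace n k (vhess u x)
        + g (u x) * ktraceDeriv n k (vhess u x) (Matrix.vecMulVec (vgrad u x) (vgrad u x))
        + f x (u x) = 0) ↔
    (∀ x ∈ Ω, ktrace n k (vhess (Phig g ∘ u) x)
        + Real.exp ((k : ℝ) * Gg g (Φinv ((Phig g ∘ u) x)))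
            * f x (Φinv ((Phig g ∘ u) x)) = 0) := by
  have hvgood : ∀ x ∈ Ω,
      ktrace n k (vhess (Phig g ∘ u) x)
      = Real.exp ((k : ℝ) * Gg g (u x)) * (ktrace n k (vhess u x)
          + g (u x) * ktraceDeriv n k (vhess u x)
              (Matrix.vecMulVec (vgrad u x) (vgrad u x))) := by
    intro x hx
    rw [vhess_comp hΩ hg hu hx, ktrace_smul, ktrace_add_smul', ← Real.exp_nat_mul]
  refine forall₂_congr fun x hx => ?_
  have h1 : Φinv ((Phig g ∘ u) x) = u x := hleft (u x)
  rw [h1, hvgood x hx, ← mul_add, mul_eq_zero]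
  simp [Real.exp_ne_zero]
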